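/- (Lemma 6.) Let z ∈ Ξ, φ ∈ Φ, g ∈ Δ_z, and suppose φ and g are not both identically zero. Then: (1) deg G_z(φ,g) = deg(φ − g*g) > 0, where deg denotes polynomial degree and g*g is the scalar polynomial g(ω)*g(ω); and (2) the leading coefficient of the polynomial matrix G_z(φ,g) is a nonzero complex scalar multiple of the matrix D z z*. -/

import Mathlib

open Polynomial Matrix

noncomputable section

/-- The matrix `D = diag(-1,1,...,1)` of size `ν × ν` with `ν = n + 2`. -/
def Dm (n : ℕ) : Matrix (Fin (n + 2)) (Fin (n + 2)) ℂ :=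
  Matrix.diagonal fun i => if i = 0 then -1 else 1

/-- Coefficientwise complex conjugation of a scalar polynomial (`ω` treated as real). -/
def cstar (p : ℂ[X]) : ℂ[X] := p.map (starRingEnd ℂ)

/-- Polynomial matrices of size `(n+2) × (n+2)`. -/
abbrev PM (n : ℕ) := Matrix (Fin (n + 2)) (Fin (n + 2)) ℂ[X]

/-- `U(ω)* = Σ Uι* ωⁱ` : coefficientwise conjugate transpose of a polynomial matrix. -/
def Mstar (n : ℕ) (U : PM n) : PM n := Matrix.of fun i j => cstar (U j i)

/-- The scalar polynomial `g(ω)* h(ω)` for vector polynomials `g, h`. -/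
def pdot (n : ℕ) (g h : Fin (n + 2) → ℂ[X]) : ℂ[X] := ∑ i, cstar (g i) * h i

/-- `Ξ = {z : z₁ = 1, z* D z = 0}`. -/
def Xi (n : ℕ) : Set (Fin (n + 2) → ℂ) :=
  {z | z 0 = 1 ∧ star z ⬝ᵥ (Dm n).mulVec z = 0}

/-- `Δ_z⁰ = {d : d* z = d* D z = 0}`. -/
def Delta0 (n : ℕ) (z : Fin (n + 2) → ℂ) : Set (Fin (n + 2) → ℂ) :=
  {d | star d ⬝ᵥ z = 0 ∧ star d ⬝ᵥ (Dm n).mulVec z = 0}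

/-- `Φ = {φ : φ(0) = 0, φ* = -φ}`. -/
def Phi : Set ℂ[X] := {φ | φ.eval 0 = 0 ∧ cstar φ = -φ}

/-- `Δ_z` : vector polynomials vanishing at 0 with all coefficient vectors in `Δ_z⁰`. -/
def DeltaZ (n : ℕ) (z : Fin (n + 2) → ℂ) : Set (Fin (n + 2) → ℂ[X]) :=
  {g | (∀ i, (g i).eval 0 = 0) ∧ ∀ k : ℕ, (fun i => (g i).coeff k) ∈ Delta0 n z}

/-- `G_z(φ,g) = D·[z(φ - (1/2)g*g)z* + (zg* - gz*)] + I`. -/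
def Gmat (n : ℕ) (z : Fin (n + 2) → ℂ) (φ : ℂ[X]) (g : Fin (n + 2) → ℂ[X]) : PM n :=
  (Dm n).map Polynomial.C *
      Matrix.of (fun i j =>
        Polynomial.C (z i) * (φ - Polynomial.C (1 / 2 : ℂ) * pdot n g g) *
            Polynomial.C (star (z j)) +
          (Polynomial.C (z i) * cstar (g j) - g i * Polynomial.C (star (z j)))) +
    1

/-- `M` : the group of polynomial matrices with `U(ω) D U(ω)* = D`. -/
def MM (n : ℕ) : Set (PM n) :=
  {U | U * (Dm n).map Polynomial.C * Mstar n U = (Dm n).map Polynomial.C}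

/-- `M₀ = {U ∈ M : U(0) = I}`. -/
def M0 (n : ℕ) : Set (PM n) :=
  {U | U ∈ MM n ∧ U.map (fun p => p.eval 0) = 1}

/-- `M_z = {G_z(φ,g) : φ ∈ Φ, g ∈ Δ_z}`. -/
def Mz (n : ℕ) (z : Fin (n + 2) → ℂ) : Set (PM n) :=
  {U | ∃ φ ∈ Phi, ∃ g ∈ DeltaZ n z, U = Gmat n z φ g}

/-- `Ψ_z = {G_z(φ,0) : φ ∈ Φ}`. -/
def Psi (n : ℕ) (z : Fin (n + 2) → ℂ) : Set (PM n) :=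
  {U | ∃ φ ∈ Phi, U = Gmat n z φ 0}

/-- Degree of a polynomial matrix: the largest `ι` with a nonzero coefficient `ω^ι`. -/
def degPM (n : ℕ) (U : PM n) : ℕ :=
  Finset.univ.sup fun p : Fin (n + 2) × Fin (n + 2) => (U p.1 p.2).natDegree


lemma cstar_coeff (p : ℂ[X]) (k : ℕ) : (cstar p).coeff k = star (p.coeff k) :=
  Polynomial.coeff_map _ _

lemma cstar_natDegree (p : ℂ[X]) : (cstar p).natDegree = p.natDegree :=
  Polynomial.natDegree_map_eq_of_injective (RingHom.injective _) p

lemma cstar_mul (p q : ℂ[X]) : cstar (p * q) = cstar p * cstar q := Polynomial.map_mul _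

lemma cstar_cstar (p : ℂ[X]) : cstar (cstar p) = p := by
  simp [cstar, Polynomial.map_map]

lemma Gmat_entry (n : ℕ) (z : Fin (n + 2) → ℂ) (φ : ℂ[X]) (g : Fin (n + 2) → ℂ[X])
    (i j : Fin (n + 2)) :
    Gmat n z φ g i j = Polynomial.C (if i = 0 then (-1:ℂ) else 1) *
      (Polynomial.C (z i) * (φ - Polynomial.C (1/2:ℂ) * pdot n g g) * Polynomial.C (star (z j)) +
        (Polynomial.C (z i) * cstar (g j) - g i * Polynomial.C (star (z j)))) +
      (if i = j then 1 else 0) := by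
  have h : (Dm n).map Polynomial.C
      = Matrix.diagonal (fun i => Polynomial.C (if i = 0 then (-1:ℂ) else 1)) := by
    rw [Dm, Matrix.diagonal_map (map_zero _)]
  rw [Gmat, h, Matrix.add_apply, Matrix.diagonal_mul]
  rw [Matrix.one_apply]
  rfl

-- self-conjugacy of pdot g g
lemma pdot_self_star (n : ℕ) (g : Fin (n + 2) → ℂ[X]) (k : ℕ) :
    star ((pdot n g g).coeff k) = (pdot n g g).coeff k := by
  have h : cstar (pdot n g g) = pdot n g g := by
    unfold pdot cstar
    rw [Polynomial.map_sum]
    refine Finset.sum_congr rfl fun i _ => ?_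
    show cstar (cstar (g i) * g i) = cstar (g i) * g i
    rw [cstar_mul, cstar_cstar]
    ring
  have := congrArg (fun p => Polynomial.coeff p k) h
  simpa [cstar_coeff] using this

lemma pdot_coeff (n : ℕ) (g : Fin (n+2) → ℂ[X]) (k : ℕ) :
    (pdot n g g).coeff k
      = ∑ i, ∑ x ∈ Finset.HasAntidiagonal.antidiagonal k, star ((g i).coeff x.1) * (g i).coeff x.2 := by
  unfold pdot
  rw [Polynomial.finset_sum_coeff]
  refine Finset.sum_congr rfl fun i _ => ?_
  rw [Polynomial.coeff_mul]
  exact Finset.sum_congr rfl fun x _ => by rw [cstar_coeff]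

lemma pdot_natDegree_le (n : ℕ) (g : Fin (n+2) → ℂ[X]) (d : ℕ)
    (hgd : ∀ i, (g i).natDegree ≤ d) : (pdot n g g).natDegree ≤ 2 * d := by
  unfold pdot
  refine Polynomial.natDegree_sum_le_of_forall_le _ _ fun i _ => ?_
  calc (cstar (g i) * g i).natDegree ≤ (cstar (g i)).natDegree + (g i).natDegree :=
        Polynomial.natDegree_mul_le
    _ = (g i).natDegree + (g i).natDegree := by rw [cstar_natDegree]
    _ ≤ 2 * d := by have := hgd i; omega

lemma pdot_coeff_top (n : ℕ) (g : Fin (n+2) → ℂ[X]) (d : ℕ)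
    (hgd : ∀ i, (g i).natDegree ≤ d) :
    (pdot n g g).coeff (2 * d) = ∑ i, star ((g i).coeff d) * (g i).coeff d := by
  rw [pdot_coeff]
  refine Finset.sum_congr rfl fun i _ => ?_
  refine Finset.sum_eq_single (d, d) (fun x hx hne => ?_) (fun h => absurd ?_ h)
  · have h1 : x.1 + x.2 = 2 * d := Finset.HasAntidiagonal.mem_antidiagonal.mp hx
    rcases lt_or_ge d x.1 with h2 | h2
    · rw [Polynomial.coeff_eq_zero_of_natDegree_lt (lt_of_le_of_lt (hgd i) h2), star_zero,
        zero_mul]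
    · have hx2 : d < x.2 := by
        by_contra hcon
        push_neg at hcon
        exact hne (Prod.ext (by omega) (by omega))
      rw [Polynomial.coeff_eq_zero_of_natDegree_lt (lt_of_le_of_lt (hgd i) hx2), mul_zero]
  · exact Finset.HasAntidiagonal.mem_antidiagonal.mpr (by omega)

/-- Lemma 6: if `φ` and `g` are not both zero, then
`deg G_z(φ,g) = deg(φ − g*g) > 0` and the leading coefficient of `G_z(φ,g)` is a
nonzero scalar multiple of `D z z*`. -/
theorem stmt18 (n : ℕ) (z : Fin (n + 2) → ℂ) (hz : z ∈ Xi n)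
    (φ : ℂ[X]) (hφ : φ ∈ Phi) (g : Fin (n + 2) → ℂ[X]) (hg : g ∈ DeltaZ n z)
    (hnt : ¬(φ = 0 ∧ g = 0)) :
    degPM n (Gmat n z φ g) = (φ - pdot n g g).natDegree ∧
      0 < (φ - pdot n g g).natDegree ∧
      ∃ c : ℂ, c ≠ 0 ∧
        (Gmat n z φ g).map (fun p => p.coeff (degPM n (Gmat n z φ g))) =
          c • (Dm n * vecMulVec z (star z)) := by
  classical
  obtain ⟨hz0, -⟩ := hz
  obtain ⟨hφ0, hφstar⟩ := hφ
  obtain ⟨hg0, -⟩ := hg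
  set s : ℂ[X] := pdot n g g with hs
  set M : ℕ := max φ.natDegree s.natDegree with hMdef
  have hφim : ∀ k, star (φ.coeff k) = - φ.coeff k := by
    intro k
    have := congrArg (fun p => Polynomial.coeff p k) hφstar
    simpa [cstar_coeff] using this
  have hφre : (φ.coeff M).re = 0 := by
    have h2 := congrArg Complex.re (hφim M)
    simp [Complex.star_def] at h2
    linarith
  have hsim : (s.coeff M).im = 0 := by
    have h2 := congrArg Complex.im (pdot_self_star n g M)
    simp [Complex.star_def, ← hs] at h2
    linarith
  have hφnd : φ ≠ 0 → 0 < φ.natDegree := by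
    intro hφne
    rcases Nat.eq_zero_or_pos φ.natDegree with h | h
    · exfalso
      rcases Polynomial.natDegree_eq_zero.mp h with ⟨a, ha⟩
      rw [← ha] at hφ0 hφne
      simp at hφ0
      simp [hφ0] at hφne
    · exact h
  have hmain : (∀ i k, M ≤ k → (g i).coeff k = 0) ∧ 0 < M ∧
      (φ.coeff M ≠ 0 ∨ s.coeff M ≠ 0) := by
    by_cases hgz : g = 0
    · have hsz : s = 0 := by simp [hs, pdot, hgz, cstar]
      have hφne : φ ≠ 0 := fun h => hnt ⟨h, hgz⟩
      have hM : M = φ.natDegree := by rw [hMdef, hsz]; simp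
      refine ⟨fun i k _ => by simp [hgz], ?_, Or.inl ?_⟩
      · rw [hM]; exact hφnd hφne
      · rw [hM]; exact Polynomial.leadingCoeff_ne_zero.mpr hφne
    · set d : ℕ := Finset.univ.sup (fun i => (g i).natDegree) with hd
      have hgd : ∀ i, (g i).natDegree ≤ d := fun i => by
        rw [hd]; exact Finset.le_sup (f := fun i => (g i).natDegree) (Finset.mem_univ i)
      obtain ⟨i₀, hi₀⟩ : ∃ i, g i ≠ 0 := by
        by_contra hcon; push_neg at hcon; exact hgz (funext hcon)
      have hpos_nd : ∀ i, g i ≠ 0 → 0 < (g i).natDegree := by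
        intro i hi
        rcases Nat.eq_zero_or_pos (g i).natDegree with h | h
        · exfalso
          rcases Polynomial.natDegree_eq_zero.mp h with ⟨a, ha⟩
          have h0 := hg0 i
          rw [← ha] at h0 hi
          simp at h0
          simp [h0] at hi
        · exact h
      have hdpos : 0 < d := lt_of_lt_of_le (hpos_nd i₀ hi₀) (hgd i₀)
      obtain ⟨i₁, -, hi₁⟩ := Finset.exists_mem_eq_sup Finset.univ Finset.univ_nonempty
        (fun i => (g i).natDegree)
      have hgne₁ : g i₁ ≠ 0 := by
        intro h; rw [h] at hi₁; simp [← hd] at hi₁; omega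
      have hlead : (g i₁).coeff d ≠ 0 := by
        rw [← hd] at hi₁
        rw [hi₁]
        exact Polynomial.leadingCoeff_ne_zero.mpr hgne₁
      have hsum : s.coeff (2 * d) = ((∑ i, Complex.normSq ((g i).coeff d) : ℝ) : ℂ) := by
        rw [hs, pdot_coeff_top n g d hgd]
        push_cast
        refine Finset.sum_congr rfl fun i _ => ?_
        rw [Complex.star_def, mul_comm, Complex.mul_conj]
      have hsumpos : (0:ℝ) < ∑ i, Complex.normSq ((g i).coeff d) := by
        refine Finset.sum_pos' (fun i _ => Complex.normSq_nonneg _) ⟨i₁, Finset.mem_univ _, ?_⟩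
        exact Complex.normSq_pos.mpr hlead
      have hs2d : s.coeff (2 * d) ≠ 0 := by
        rw [hsum]; exact_mod_cast hsumpos.ne'
      have hsnd : s.natDegree = 2 * d :=
        le_antisymm (pdot_natDegree_le n g d hgd) (Polynomial.le_natDegree_of_ne_zero hs2d)
      have hMge : 2 * d ≤ M := hsnd ▸ le_max_right _ _
      refine ⟨?_, by omega, ?_⟩
      · intro i k hk
        exact Polynomial.coeff_eq_zero_of_natDegree_lt
          (lt_of_le_of_lt (hgd i) (by have := hgd i; omega))
      · rcases le_or_gt φ.natDegree s.natDegree with h | h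
        · right
          have hM : M = s.natDegree := max_eq_right h
          rw [hM]
          exact Polynomial.leadingCoeff_ne_zero.mpr (fun h0 => by simp [h0] at hs2d)
        · left
          have hM : M = φ.natDegree := max_eq_left h.le
          have hφne : φ ≠ 0 := by
            intro h0; rw [h0] at h; simp only [Polynomial.natDegree_zero] at h; omega
          rw [hM]; exact Polynomial.leadingCoeff_ne_zero.mpr hφne
  obtain ⟨hgMc, hMpos, hnotboth⟩ := hmain
  have hkey : ∀ r : ℝ, 0 < r → φ.coeff M - (r:ℂ) * s.coeff M ≠ 0 := by
    intro r hr hcon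
    rcases hnotboth with h | h
    · apply h
      apply Complex.ext hφre
      have him := congrArg Complex.im hcon
      simpa [Complex.sub_im, Complex.mul_im, Complex.ofReal_im, Complex.ofReal_re, hsim]
        using him
    · apply h
      refine Complex.ext ?_ hsim
      have hre := congrArg Complex.re hcon
      simp [Complex.sub_re, Complex.mul_re, Complex.ofReal_im, Complex.ofReal_re, hφre, hsim]
        at hre
      rcases hre with h' | h'
      · exact absurd h' (ne_of_gt hr)
      · simpa using h'
  set cM : ℂ := (φ - Polynomial.C (1/2:ℂ) * s).coeff M with hcM
  have hcM_eq : cM = φ.coeff M - (1/2:ℂ) * s.coeff M := by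
    rw [hcM]
    simp [Polynomial.coeff_sub, Polynomial.coeff_C_mul]
  have hcMne : cM ≠ 0 := by
    rw [hcM_eq]
    have := hkey (1/2) (by norm_num)
    simpa using this
  have hφsM : (φ - s).coeff M ≠ 0 := by
    have := hkey 1 one_pos
    simpa [Polynomial.coeff_sub] using this
  have hφsnd : (φ - s).natDegree = M :=
    le_antisymm ((Polynomial.natDegree_sub_le _ _).trans_eq hMdef.symm)
      (Polynomial.le_natDegree_of_ne_zero hφsM)
  have hhalf_le : (φ - Polynomial.C (1/2:ℂ) * s).natDegree ≤ M := by
    refine le_trans (Polynomial.natDegree_sub_le _ _) ?_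
    exact max_le (le_max_left _ _)
      (le_trans (Polynomial.natDegree_C_mul_le _ _) (le_max_right _ _))
  have hentry : ∀ i j k, (Gmat n z φ g i j).coeff k
      = (if i = 0 then (-1:ℂ) else 1) *
          (z i * (φ - Polynomial.C (1/2:ℂ) * s).coeff k * star (z j)
            + (z i * star ((g j).coeff k) - (g i).coeff k * star (z j)))
        + (if i = j then (if k = 0 then (1:ℂ) else 0) else 0) := by
    intro i j k
    rw [Gmat_entry]
    simp only [← hs, Polynomial.coeff_add, Polynomial.coeff_sub, Polynomial.coeff_C_mul,
      Polynomial.coeff_mul_C, cstar_coeff, apply_ite (fun q : ℂ[X] => q.coeff k),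
      Polynomial.coeff_one, Polynomial.coeff_zero]
  have hboundk : ∀ i j k, M < k → (Gmat n z φ g i j).coeff k = 0 := by
    intro i j k hk
    rw [hentry]
    rw [Polynomial.coeff_eq_zero_of_natDegree_lt (lt_of_le_of_lt hhalf_le hk)]
    rw [hgMc j k hk.le, hgMc i k hk.le]
    have hk0 : k ≠ 0 := by omega
    simp [hk0]
  have hcoeffM : ∀ i j, (Gmat n z φ g i j).coeff M
      = cM * ((if i = 0 then (-1:ℂ) else 1) * (z i * star (z j))) := by
    intro i j
    rw [hentry, hgMc i M le_rfl, hgMc j M le_rfl]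
    have hM0 : M ≠ 0 := by omega
    rw [← hcM]
    simp [hM0]
    split <;> ring
  have hdeg : degPM n (Gmat n z φ g) = M := by
    apply le_antisymm
    · refine Finset.sup_le fun p _ => ?_
      exact Polynomial.natDegree_le_iff_coeff_eq_zero.mpr fun N hN => hboundk p.1 p.2 N hN
    · refine le_trans ?_ (Finset.le_sup (Finset.mem_univ ((0 : Fin (n+2)), (0 : Fin (n+2)))))
      apply Polynomial.le_natDegree_of_ne_zero
      rw [hcoeffM]
      simp [hz0, hcMne]
  refine ⟨by rw [hdeg, hφsnd], by rw [hφsnd]; exact hMpos, cM, hcMne, ?_⟩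
  rw [hdeg]
  ext i j
  rw [Matrix.map_apply, hcoeffM i j, Matrix.smul_apply, Dm, Matrix.diagonal_mul,
    Matrix.vecMulVec_apply]
  simp only [Pi.star_apply, smul_eq_mul]
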